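/- If |N| ≥ |U|, each UE has quota 1, and all entries of the |U| × |N| utility matrix are pairwise distinct, with preferences of both UEs and RBs derived from this common matrix (each side ranks the other by the matrix entries), then there exists exactly one stable matching. -/

import Mathlib

universe u v

theorem aux_stable_unique : ∀ (k : ℕ), ∀ {U : Type u} {N : Type v} [Fintype U] [Fintype N]
    [DecidableEq U] [DecidableEq N] (𝔘 : U → N → ℝ),
    Fintype.card U = k → Fintype.card U ≤ Fintype.card N →
    Function.Injective (fun p : U × N => 𝔘 p.1 p.2) →
    ∃! μ : U → Option N,
      (∀ u u' n, μ u = some n → μ u' = some n → u = u') ∧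
      ¬ ∃ (u : U) (n : N),
          (μ u = none ∨ ∃ n', μ u = some n' ∧ 𝔘 u n' < 𝔘 u n) ∧
          ((∀ u', μ u' ≠ some n) ∨ ∃ u', μ u' = some n ∧ 𝔘 u' n < 𝔘 u n) := by
  intro k
  induction k with
  | zero =>
    intro U N _ _ _ _ 𝔘 hk hcard hinj
    have hU : IsEmpty U := Fintype.card_eq_zero_iff.mp hk
    refine ⟨fun _ => none, ⟨?_, ?_⟩, ?_⟩
    · intro u; exact hU.elim u
    · rintro ⟨u, -⟩; exact hU.elim u
    · intro μ _; funext u; exact hU.elim u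
  | succ k ih =>
    intro U N _ _ _ _ 𝔘 hk hcard hinj
    have hUne : Nonempty U := Fintype.card_pos_iff.mp (by omega)
    have hNne : Nonempty N := Fintype.card_pos_iff.mp (by omega)
    have hNpne : Nonempty (U × N) := ⟨hUne.some, hNne.some⟩
    obtain ⟨⟨u₀, n₀⟩, hmax⟩ := Finite.exists_max (fun p : U × N => 𝔘 p.1 p.2)
    -- strict maximality against any other pair
    have hstrict : ∀ u n, (u, n) ≠ (u₀, n₀) → 𝔘 u n < 𝔘 u₀ n₀ := by
      intro u n hne
      rcases lt_or_eq_of_le (hmax (u, n)) with h | h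
      · exact h
      · exact absurd (hinj h) hne
    -- every stable matching matches u₀ with n₀
    have keyA : ∀ μ : U → Option N,
        ((∀ u u' n, μ u = some n → μ u' = some n → u = u') ∧
        ¬ ∃ (u : U) (n : N),
          (μ u = none ∨ ∃ n', μ u = some n' ∧ 𝔘 u n' < 𝔘 u n) ∧
          ((∀ u', μ u' ≠ some n) ∨ ∃ u', μ u' = some n ∧ 𝔘 u' n < 𝔘 u n)) →
        μ u₀ = some n₀ := by
      intro μ ⟨hm, hb⟩
      by_contra h
      apply hb
      refine ⟨u₀, n₀, ?_, ?_⟩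
      · cases hμ : μ u₀ with
        | none => exact Or.inl rfl
        | some n' =>
          refine Or.inr ⟨n', rfl, hstrict u₀ n' ?_⟩
          intro hc
          exact h (by rw [hμ]; exact congrArg (fun p : U × N => some p.2) hc)
      · by_cases hex : ∃ u', μ u' = some n₀
        · obtain ⟨u', hu'⟩ := hex
          refine Or.inr ⟨u', hu', hstrict u' n₀ ?_⟩
          intro hc
          have hc' : u' = u₀ := congrArg Prod.fst hc
          exact h (hc' ▸ hu')
        · exact Or.inl (fun u' hu' => hex ⟨u', hu'⟩)
    -- restricted problem
    set U' := {u : U // u ≠ u₀} with hU'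
    set N' := {n : N // n ≠ n₀} with hN'
    have hcardU' : Fintype.card U' = k := by
      have := Fintype.card_subtype_compl (fun u : U => u = u₀)
      simp only [Fintype.card_subtype_eq] at this
      have h2 : Fintype.card U' = Fintype.card {u : U // ¬ u = u₀} := rfl
      omega
    have hcardN' : Fintype.card N' = Fintype.card N - 1 := by
      have := Fintype.card_subtype_compl (fun n : N => n = n₀)
      simp only [Fintype.card_subtype_eq] at this
      have h2 : Fintype.card N' = Fintype.card {n : N // ¬ n = n₀} := rfl
      omega
    have hcard' : Fintype.card U' ≤ Fintype.card N' := by omega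
    set 𝔘' : U' → N' → ℝ := fun u n => 𝔘 u.1 n.1 with h𝔘'
    have hinj' : Function.Injective (fun p : U' × N' => 𝔘' p.1 p.2) := by
      rintro ⟨u, n⟩ ⟨u', n'⟩ h
      have := hinj (a₁ := (u.1, n.1)) (a₂ := (u'.1, n'.1)) h
      simp only [Prod.mk.injEq] at this
      exact Prod.ext (Subtype.ext this.1) (Subtype.ext this.2)
    obtain ⟨μ', ⟨hm', hb'⟩, huniq'⟩ := ih 𝔘' hcardU' hcard' hinj'
    -- lift and restrict
    set lift : (U' → Option N') → U → Option N :=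
      fun ν u => if h : u = u₀ then some n₀ else (ν ⟨u, h⟩).map Subtype.val with hlift
    set restr : (U → Option N) → U' → Option N' :=
      fun μ u' => (μ u'.1).bind (fun n => if h : n = n₀ then none else some ⟨n, h⟩)
      with hrestr
    have lift_pos : ∀ ν, lift ν u₀ = some n₀ := fun ν => dif_pos rfl
    have lift_neg : ∀ ν u (h : u ≠ u₀), lift ν u = (ν ⟨u, h⟩).map Subtype.val :=
      fun ν u h => dif_neg h
    have restr_some : ∀ μ (u' : U') (m : N'), restr μ u' = some m ↔ μ u'.1 = some m.1 := by
      intro μ u' m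
      constructor
      · intro h
        cases hμ : μ u'.1 with
        | none => rw [hrestr] at h; simp [hμ] at h
        | some n =>
          rw [hrestr] at h
          simp only [hμ, Option.bind_some] at h
          by_cases hn : n = n₀
          · simp [hn] at h
          · simp only [dif_neg hn, Option.some.injEq] at h
            exact congrArg (fun x : N' => some x.1) h
      · intro h
        rw [hrestr]
        simp only [h, Option.bind_some, dif_neg m.2, Subtype.coe_eta]
    have restr_none : ∀ μ (u' : U'), μ u'.1 = none → restr μ u' = none := by
      intro μ u' h; rw [hrestr]; simp [h]
    -- restr of a stable matching is stable; and lift ∘ restr = id on stable matchings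
    have keyB : ∀ μ : U → Option N,
        ((∀ u u' n, μ u = some n → μ u' = some n → u = u') ∧
        ¬ ∃ (u : U) (n : N),
          (μ u = none ∨ ∃ n', μ u = some n' ∧ 𝔘 u n' < 𝔘 u n) ∧
          ((∀ u', μ u' ≠ some n) ∨ ∃ u', μ u' = some n ∧ 𝔘 u' n < 𝔘 u n)) →
        ((∀ u u' n, restr μ u = some n → restr μ u' = some n → u = u') ∧
        ¬ ∃ (u : U') (n : N'),
          (restr μ u = none ∨ ∃ n', restr μ u = some n' ∧ 𝔘' u n' < 𝔘' u n) ∧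
          ((∀ u', restr μ u' ≠ some n) ∨ ∃ u', restr μ u' = some n ∧ 𝔘' u' n < 𝔘' u n))
        ∧ lift (restr μ) = μ := by
      intro μ hgood
      have hu₀ := keyA μ hgood
      obtain ⟨hm, hb⟩ := hgood
      have hnot : ∀ u : U, u ≠ u₀ → μ u ≠ some n₀ := by
        intro u hu hc
        exact hu (hm u u₀ n₀ hc hu₀)
      refine ⟨⟨?_, ?_⟩, ?_⟩
      · intro u u' n h1 h2
        exact Subtype.ext (hm u.1 u'.1 n.1 ((restr_some μ u n).mp h1)
          ((restr_some μ u' n).mp h2))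
      · rintro ⟨u, n, hcond1, hcond2⟩
        apply hb
        refine ⟨u.1, n.1, ?_, ?_⟩
        · rcases hcond1 with h | ⟨n', hn', hlt⟩
          · left
            cases hμ : μ u.1 with
            | none => rfl
            | some m =>
              exfalso
              by_cases hmn : m = n₀
              · exact hnot u.1 u.2 (hmn ▸ hμ)
              · rw [(restr_some μ u ⟨m, hmn⟩).mpr hμ] at h; exact nomatch h
          · exact Or.inr ⟨n'.1, (restr_some μ u n').mp hn', hlt⟩
        · rcases hcond2 with h | ⟨u', hu', hlt⟩
          · left
            intro u' hu'
            by_cases hueq : u' = u₀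
            · rw [hueq, hu₀] at hu'
              exact n.2 (Option.some.injEq .. ▸ hu').symm
            · exact h ⟨u', hueq⟩ ((restr_some μ ⟨u', hueq⟩ n).mpr hu')
          · exact Or.inr ⟨u'.1, (restr_some μ u' n).mp hu', hlt⟩
      · funext u
        by_cases hu : u = u₀
        · rw [hu, lift_pos, hu₀]
        · rw [lift_neg _ u hu]
          cases hμ : μ u with
          | none => rw [restr_none μ ⟨u, hu⟩ hμ]; rfl
          | some m =>
            have hmn : m ≠ n₀ := fun hc => hnot u hu (hc ▸ hμ)
            rw [(restr_some μ ⟨u, hu⟩ ⟨m, hmn⟩).mpr hμ]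
            rfl
    -- lift of a stable matching is stable
    have keyC :
        ((∀ u u' n, lift μ' u = some n → lift μ' u' = some n → u = u') ∧
        ¬ ∃ (u : U) (n : N),
          (lift μ' u = none ∨ ∃ n', lift μ' u = some n' ∧ 𝔘 u n' < 𝔘 u n) ∧
          ((∀ u', lift μ' u' ≠ some n) ∨ ∃ u', lift μ' u' = some n ∧ 𝔘 u' n < 𝔘 u n)) := by
      constructor
      · intro u u' n h1 h2
        by_cases hu : u = u₀ <;> by_cases hu' : u' = u₀
        · rw [hu, hu']
        · exfalso
          rw [hu, lift_pos] at h1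
          rw [lift_neg _ u' hu'] at h2
          obtain ⟨m, hm2, hm3⟩ := Option.map_eq_some_iff.mp h2
          exact m.2 (hm3.trans (Option.some.injEq .. ▸ h1).symm)
        · exfalso
          rw [hu', lift_pos] at h2
          rw [lift_neg _ u hu] at h1
          obtain ⟨m, hm2, hm3⟩ := Option.map_eq_some_iff.mp h1
          exact m.2 (hm3.trans (Option.some.injEq .. ▸ h2).symm)
        · rw [lift_neg _ u hu] at h1
          rw [lift_neg _ u' hu'] at h2
          obtain ⟨m, hm2, hm3⟩ := Option.map_eq_some_iff.mp h1
          obtain ⟨m', hm2', hm3'⟩ := Option.map_eq_some_iff.mp h2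
          have : m = m' := Subtype.ext (hm3.trans hm3'.symm)
          have := hm' ⟨u, hu⟩ ⟨u', hu'⟩ m hm2 (this ▸ hm2')
          exact congrArg Subtype.val this
      · rintro ⟨u, n, hcond1, hcond2⟩
        by_cases hu : u = u₀
        · subst hu
          rcases hcond1 with h | ⟨n', hn', hlt⟩
          · rw [lift_pos] at h; exact nomatch h
          · rw [lift_pos] at hn'
            have hn'₀ : n' = n₀ := (Option.some.injEq .. ▸ hn').symm
            subst hn'₀
            exact absurd (hmax (u, n)) (not_le.mpr hlt)
        · by_cases hn : n = n₀
          · subst hn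
            rcases hcond2 with h | ⟨u', hu', hlt⟩
            · exact h u₀ (lift_pos μ')
            · have hu'₀ : u' = u₀ := by
                by_contra hc
                rw [lift_neg _ u' hc] at hu'
                obtain ⟨m, -, hm3⟩ := Option.map_eq_some_iff.mp hu'
                exact m.2 hm3
              subst hu'₀
              exact absurd (hmax (u, n)) (not_le.mpr hlt)
          · apply hb'
            refine ⟨⟨u, hu⟩, ⟨n, hn⟩, ?_, ?_⟩
            · rcases hcond1 with h | ⟨n', hn', hlt⟩
              · left
                rw [lift_neg _ u hu] at h
                exact Option.map_eq_none_iff.mp h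
              · right
                rw [lift_neg _ u hu] at hn'
                obtain ⟨m, hm2, hm3⟩ := Option.map_eq_some_iff.mp hn'
                exact ⟨m, hm2, by rw [h𝔘']; simpa [hm3] using hlt⟩
            · rcases hcond2 with h | ⟨u', hu', hlt⟩
              · left
                intro u'' hc
                apply h u''.1
                rw [lift_neg _ u''.1 u''.2]
                simp [hc]
              · right
                have hu'₀ : u' ≠ u₀ := by
                  intro hc
                  rw [hc, lift_pos] at hu'
                  exact hn ((Option.some.injEq .. ▸ hu')).symm
                rw [lift_neg _ u' hu'₀] at hu'
                obtain ⟨m, hm2, hm3⟩ := Option.map_eq_some_iff.mp hu'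
                refine ⟨⟨u', hu'₀⟩, ?_, hlt⟩
                rw [hm2]
                exact congrArg some (Subtype.ext hm3)
    refine ⟨lift μ', keyC, ?_⟩
    intro μ hgood
    obtain ⟨hgood', hlr⟩ := keyB μ hgood
    rw [← hlr, huniq' (restr μ) hgood']

/-- Uniqueness of the stable matching (Proposition 3): if there are at least as
many RBs as UEs, every quota is 1, and preferences of both UEs and RBs are
derived from a common utility matrix `𝔘` with pairwise distinct entries, then
there exists exactly one stable matching.  A matching `μ : U → Option N`
assigns each UE at most one RB, injectively; it is stable iff there is no
blocking pair `(u, n)`, i.e. no pair such that `u` prefers `n` to its current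
assignment (or is unmatched) and `n` is free or held by a UE that `n` likes
less than `u`. -/
theorem stmt_7 {U N : Type*} [Fintype U] [Fintype N] [DecidableEq U] [DecidableEq N]
    (𝔘 : U → N → ℝ)
    (hcard : Fintype.card U ≤ Fintype.card N)
    (hinj : Function.Injective (fun p : U × N => 𝔘 p.1 p.2)) :
    ∃! μ : U → Option N,
      (∀ u u' n, μ u = some n → μ u' = some n → u = u') ∧
      ¬ ∃ (u : U) (n : N),
          (μ u = none ∨ ∃ n', μ u = some n' ∧ 𝔘 u n' < 𝔘 u n) ∧
          ((∀ u', μ u' ≠ some n) ∨ ∃ u', μ u' = some n ∧ 𝔘 u' n < 𝔘 u n) := by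
  exact aux_stable_unique (Fintype.card U) 𝔘 rfl hcard hinj
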